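/- The third derivative of the effective potential at ȳ equals V‴(ȳ) = (q μ₀/(π m²)) p_z I₀ (1+k)⁴(k−1)/(k² d³); equivalently, the coefficient β₀ := (1/2) V‴(ȳ) equals (q μ₀/(2π m²)) p_z I₀ (1+k)⁴(k−1)/(k² d³). -/

import Mathlib

set_option maxHeartbeats 1000000

open Real

private lemma hasDerivAt_F0 (c I₀ k d : ℝ) {y : ℝ} (h0 : y ≠ 0) (h1 : y - d ≠ 0) :
    HasDerivAt (fun y : ℝ => -c * (I₀ * Real.log y + k * I₀ * Real.log (y - d)))
      (-c * (I₀ * y⁻¹ + k * I₀ * (y - d)⁻¹)) y := by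
  have l1 : HasDerivAt (fun y : ℝ => Real.log y) y⁻¹ y := Real.hasDerivAt_log h0
  have l2 : HasDerivAt (fun y : ℝ => Real.log (y - d)) (y - d)⁻¹ y := by
    have := ((hasDerivAt_id' y).sub_const d).log h1
    simpa [one_div] using this
  exact ((l1.const_mul I₀).add (l2.const_mul (k * I₀))).const_mul (-c)

private lemma hasDerivAt_F1 (c I₀ k d : ℝ) {y : ℝ} (h0 : y ≠ 0) (h1 : y - d ≠ 0) :
    HasDerivAt (fun y : ℝ => -c * (I₀ * y⁻¹ + k * I₀ * (y - d)⁻¹))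
      (c * (I₀ * (y ^ 2)⁻¹ + k * I₀ * ((y - d) ^ 2)⁻¹)) y := by
  have l1 : HasDerivAt (fun y : ℝ => y⁻¹) (-(y ^ 2)⁻¹) y := hasDerivAt_inv h0
  have l2 := ((hasDerivAt_id' y).sub_const d).inv h1
  have h := ((l1.const_mul I₀).add (l2.const_mul (k * I₀))).const_mul (-c)
  refine h.congr_deriv ?_
  ring

private lemma hasDerivAt_F2 (c I₀ k d : ℝ) {y : ℝ} (h0 : y ≠ 0) (h1 : y - d ≠ 0) :
    HasDerivAt (fun y : ℝ => c * (I₀ * (y ^ 2)⁻¹ + k * I₀ * ((y - d) ^ 2)⁻¹))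
      (-(2 * c) * (I₀ * (y ^ 3)⁻¹ + k * I₀ * ((y - d) ^ 3)⁻¹)) y := by
  have l1 := (hasDerivAt_pow 2 y).inv (pow_ne_zero 2 h0)
  have l2 := (((hasDerivAt_id' y).sub_const d).pow 2).inv (pow_ne_zero 2 h1)
  have h := ((l1.const_mul I₀).add (l2.const_mul (k * I₀))).const_mul c
  refine h.congr_deriv ?_
  simp only [Pi.pow_apply]
  field_simp
  ring

/-- The third derivative of the effective potential at `ȳ`. -/
theorem third_deriv_V_at_ybar
    (μ₀ d I₀ k m q p_z : ℝ) (hμ : 0 < μ₀) (hd : 0 < d) (hI : I₀ ≠ 0)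
    (hk : k ≠ 0) (hk1 : k ≠ -1) (hm : 0 < m)
    (A₀ Atilde V : ℝ → ℝ)
    (hA : ∀ y : ℝ,
      A₀ y = -(μ₀ / (2 * π)) * (I₀ * Real.log |y| + k * I₀ * Real.log |y - d|))
    (ybar : ℝ) (hybar : ybar = d / (1 + k))
    (hAtilde : ∀ y : ℝ, Atilde y = A₀ y - A₀ ybar)
    (hV : ∀ y : ℝ, V y = (1 / (2 * m ^ 2)) * (p_z - q * Atilde y) ^ 2) :
    iteratedDeriv 3 V ybar
      = (q * μ₀ / (π * m ^ 2)) * p_z * I₀ * ((1 + k) ^ 4 * (k - 1) / (k ^ 2 * d ^ 3)) ∧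
    (1 / 2) * iteratedDeriv 3 V ybar
      = (q * μ₀ / (2 * π * m ^ 2)) * p_z * I₀ * ((1 + k) ^ 4 * (k - 1) / (k ^ 2 * d ^ 3)) := by
  have hπ : (π : ℝ) ≠ 0 := Real.pi_ne_zero
  have hd' : d ≠ 0 := ne_of_gt hd
  have hm' : m ≠ 0 := ne_of_gt hm
  have hk1' : (1 + k) ≠ 0 := fun h => hk1 (by linarith)
  subst hybar
  have hy0 : d / (1 + k) ≠ 0 := div_ne_zero hd' hk1'
  have hyd : d / (1 + k) ≠ d := by
    intro h
    rw [div_eq_iff hk1'] at h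
    have h2 : d * 1 = d * (1 + k) := by linarith
    have := mul_left_cancel₀ hd' h2
    exact hk (by linarith)
  -- abbreviations
  set c : ℝ := μ₀ / (2 * π) with hc
  set C : ℝ := 1 / (2 * m ^ 2) with hC
  set Y : ℝ := d / (1 + k) with hY
  set F : ℝ → ℝ := fun y => -c * (I₀ * Real.log y + k * I₀ * Real.log (y - d)) with hFdef
  set F1 : ℝ → ℝ := fun y => -c * (I₀ * y⁻¹ + k * I₀ * (y - d)⁻¹) with hF1def
  set F2 : ℝ → ℝ := fun y => c * (I₀ * (y ^ 2)⁻¹ + k * I₀ * ((y - d) ^ 2)⁻¹) with hF2def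
  set F3 : ℝ → ℝ := fun y => -(2 * c) * (I₀ * (y ^ 3)⁻¹ + k * I₀ * ((y - d) ^ 3)⁻¹) with hF3def
  set u : ℝ → ℝ := fun y => p_z - q * (F y - F Y) with hudef
  set W : ℝ → ℝ := fun y => C * (u y * u y) with hWdef
  set g1 : ℝ → ℝ := fun y => C * (-(q * F1 y) * u y + u y * -(q * F1 y)) with hg1def
  set g2 : ℝ → ℝ := fun y =>
      C * ((-(q * F2 y) * u y + -(q * F1 y) * -(q * F1 y)) +
           (-(q * F1 y) * -(q * F1 y) + u y * -(q * F2 y))) with hg2def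
  have hVW : V = W := by
    funext y
    rw [hV y, hAtilde y, hA y, hA Y]
    simp only [hWdef, hudef, hFdef, hC, hc, Real.log_abs]
    ring
  set U : Set ℝ := {y | y ≠ 0 ∧ y ≠ d} with hUdef
  have hUopen : IsOpen U := by
    have : U = {(0 : ℝ)}ᶜ ∩ {d}ᶜ := by
      ext y
      simp [hUdef, Set.mem_setOf_eq]
    rw [this]
    exact isOpen_compl_singleton.inter isOpen_compl_singleton
  have hYU : Y ∈ U := ⟨hy0, hyd⟩
  -- derivative helpers on U
  have hu : ∀ y ∈ U, HasDerivAt u (-(q * F1 y)) y := by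
    intro y hy
    have h1 : y - d ≠ 0 := sub_ne_zero.mpr hy.2
    simp only [hudef, hFdef, hF1def]
    exact ((hasDerivAt_F0 c I₀ k d hy.1 h1).sub_const _).const_mul q |>.const_sub p_z
  have hnu : ∀ y ∈ U, HasDerivAt (fun y => -(q * F1 y)) (-(q * F2 y)) y := by
    intro y hy
    have h1 : y - d ≠ 0 := sub_ne_zero.mpr hy.2
    simp only [hF1def, hF2def]
    exact ((hasDerivAt_F1 c I₀ k d hy.1 h1).const_mul q).neg
  have hnu2 : ∀ y ∈ U, HasDerivAt (fun y => -(q * F2 y)) (-(q * F3 y)) y := by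
    intro y hy
    have h1 : y - d ≠ 0 := sub_ne_zero.mpr hy.2
    simp only [hF2def, hF3def]
    exact ((hasDerivAt_F2 c I₀ k d hy.1 h1).const_mul q).neg
  have hderiv1 : ∀ y ∈ U, HasDerivAt W (g1 y) y := by
    intro y hy
    exact ((hu y hy).mul (hu y hy)).const_mul C
  have hderiv2 : ∀ y ∈ U, HasDerivAt g1 (g2 y) y := by
    intro y hy
    exact (((hnu y hy).mul (hu y hy)).add ((hu y hy).mul (hnu y hy))).const_mul C
  have hderiv3 : HasDerivAt g2
      (C * (((-(q * F3 Y) * u Y + -(q * F2 Y) * -(q * F1 Y)) +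
             (-(q * F2 Y) * -(q * F1 Y) + -(q * F1 Y) * -(q * F2 Y))) +
            ((-(q * F2 Y) * -(q * F1 Y) + -(q * F1 Y) * -(q * F2 Y)) +
             (-(q * F1 Y) * -(q * F2 Y) + u Y * -(q * F3 Y))))) Y := by
    exact ((((hnu2 Y hYU).mul (hu Y hYU)).add ((hnu Y hYU).mul (hnu Y hYU))).add
      (((hnu Y hYU).mul (hnu Y hYU)).add ((hu Y hYU).mul (hnu2 Y hYU)))).const_mul C
  -- chain of deriv equalities
  have e1 : Set.EqOn (deriv W) g1 U := fun y hy => (hderiv1 y hy).deriv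
  have e2 : Set.EqOn (deriv (deriv W)) g2 U := by
    intro y hy
    have : deriv W =ᶠ[nhds y] g1 := Filter.eventuallyEq_of_mem (hUopen.mem_nhds hy) e1
    rw [this.deriv_eq]
    exact (hderiv2 y hy).deriv
  have e3 : deriv (deriv (deriv W)) Y =
      C * (((-(q * F3 Y) * u Y + -(q * F2 Y) * -(q * F1 Y)) +
             (-(q * F2 Y) * -(q * F1 Y) + -(q * F1 Y) * -(q * F2 Y))) +
            ((-(q * F2 Y) * -(q * F1 Y) + -(q * F1 Y) * -(q * F2 Y)) +
             (-(q * F1 Y) * -(q * F2 Y) + u Y * -(q * F3 Y)))) := by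
    have : deriv (deriv W) =ᶠ[nhds Y] g2 := Filter.eventuallyEq_of_mem (hUopen.mem_nhds hYU) e2
    rw [this.deriv_eq]
    exact hderiv3.deriv
  have hiter : iteratedDeriv 3 V Y = deriv (deriv (deriv V)) Y := by
    simp [iteratedDeriv_succ, iteratedDeriv_zero]
  have hsub : Y - d = -(d * k) / (1 + k) := by
    rw [hY]
    field_simp
    ring
  have huY : u Y = p_z := by simp [hudef]
  have hF1Y : F1 Y = 0 := by
    simp only [hF1def]
    rw [hsub, hY]
    field_simp
    ring
  have hmain : iteratedDeriv 3 V Y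
      = q * μ₀ / (π * m ^ 2) * p_z * I₀ * ((1 + k) ^ 4 * (k - 1) / (k ^ 2 * d ^ 3)) := by
    rw [hiter, hVW, e3, huY, hF1Y]
    simp only [mul_zero, zero_mul, neg_zero, add_zero, zero_add]
    simp only [hF3def, hC, hc]
    rw [hsub, hY]
    have h1 : (((d / (1 + k)) : ℝ) ^ 3)⁻¹ = (1 + k) ^ 3 / d ^ 3 := by
      rw [div_pow, inv_div]
    have h2 : (((-(d * k) / (1 + k)) : ℝ) ^ 3)⁻¹ = (1 + k) ^ 3 / (-(d * k)) ^ 3 := by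
      rw [div_pow, inv_div]
    rw [h1, h2]
    have h3 : ((-(d * k)) : ℝ) ^ 3 = -(d ^ 3 * k ^ 3) := by ring
    rw [h3, div_neg]
    field_simp
    ring
  exact ⟨hmain, by rw [hmain]; ring⟩
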